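/- Let D be a 3×3 complex matrix (entries D_{ij}, 0-based indexing, row i and column j). The linear map x ↦ D·x on ℂ³ is a derivation of the 3-dimensional Mock-Lie algebra A_{1,3} if and only if D_{01} = 0, D_{21} = 0, D_{00} = D_{22}, D_{02} = −D_{20}, and D_{11} = 2·D_{22}. Equivalently, the derivations are exactly the linear maps whose matrix relative to the basis (e_1, e_2, e_3) has the form [[d_{33}, 0, −d_{31}], [d_{21}, 2d_{33}, d_{23}], [d_{31}, 0, d_{33}]]. -/
import Mathlib


/-- The product of the 3-dimensional Mock-Lie algebra `A_{1,3}`: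
`e_1 · e_1 = e_2`, `e_3 · e_3 = e_2`, all other products of basis vectors zero. -/
def mulA13 (x y : Fin 3 → ℂ) : Fin 3 → ℂ := ![0, x 0 * y 0 + x 2 * y 2, 0]

/-- `x ↦ D · x` is a derivation of `A_{1,3}` iff `D 0 1 = 0`, `D 2 1 = 0`,
`D 0 0 = D 2 2`, `D 0 2 = -D 2 0` and `D 1 1 = 2 * D 2 2`. -/
theorem derivation_A13_iff (D : Matrix (Fin 3) (Fin 3) ℂ) :
    (∀ x y : Fin 3 → ℂ,
        D.mulVec (mulA13 x y) = mulA13 (D.mulVec x) y + mulA13 x (D.mulVec y)) ↔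
      (D 0 1 = 0 ∧ D 2 1 = 0 ∧ D 0 0 = D 2 2 ∧ D 0 2 = -D 2 0 ∧ D 1 1 = 2 * D 2 2) := by
  constructor
  · intro h
    have h00 := h ![1,0,0] ![1,0,0]
    have h22 := h ![0,0,1] ![0,0,1]
    have h02 := h ![1,0,0] ![0,0,1]
    have a := congr_fun h00 0
    have b := congr_fun h00 1
    have c := congr_fun h00 2
    have d := congr_fun h22 1
    have e := congr_fun h02 1
    simp [mulA13, Matrix.mulVec, dotProduct, Fin.sum_univ_three] at a b c d e
    exact ⟨a, c, by linear_combination (d - b)/2, by linear_combination -e, by linear_combination d⟩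
  · rintro ⟨h1, h2, h3, h4, h5⟩ x y
    funext i
    fin_cases i <;>
      simp [mulA13, Matrix.mulVec, dotProduct, Fin.sum_univ_three, h1, h2, h3, h4, h5] <;>
      ring
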